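/- Let v : ℝ³ × ℝ → ℝ³ be continuously differentiable, let k : ℝ³ × ℝ → ℝ be twice continuously differentiable, and define z := v + grad k. Suppose z satisfies the impulse equation in the geometric gauge, ∂z/∂t + Dz·v + (Dv)ᵀ·z = 0 everywhere. Then v satisfies the incompressible Euler momentum equation ∂v/∂t(x,t) + Dv(x,t) v(x,t) = −grad p(x,t) for all (x,t), with pressure determined by p := ∂k/∂t + v · grad k + ½ v·v (equivalently, dk/dt = p − ½ v·v along fluid trajectories). -/

import Mathlib

open Matrix

/-- The Jacobian matrix of a vector field `u : ℝ³ → ℝ³` at `x`: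
`(jacAt u x) i j = ∂uᵢ/∂xⱼ (x)`. -/
noncomputable def jacAt (u : (Fin 3 → ℝ) → (Fin 3 → ℝ)) (x : Fin 3 → ℝ) :
    Matrix (Fin 3) (Fin 3) ℝ :=
  fun i j => fderiv ℝ u x (Pi.single j 1) i

/-- The gradient of a scalar function `f : ℝ³ → ℝ` at `x`. -/
noncomputable def gradAt (f : (Fin 3 → ℝ) → ℝ) (x : Fin 3 → ℝ) : Fin 3 → ℝ :=
  fun i => fderiv ℝ f x (Pi.single i 1)

/-- The curl of a vector field `u : ℝ³ → ℝ³` at `x`. -/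
noncomputable def curlAt (u : (Fin 3 → ℝ) → (Fin 3 → ℝ)) (x : Fin 3 → ℝ) : Fin 3 → ℝ :=
  ![jacAt u x 2 1 - jacAt u x 1 2,
    jacAt u x 0 2 - jacAt u x 2 0,
    jacAt u x 1 0 - jacAt u x 0 1]

/-- The divergence of a vector field `u : ℝ³ → ℝ³` at `x`. -/
noncomputable def divAt (u : (Fin 3 → ℝ) → (Fin 3 → ℝ)) (x : Fin 3 → ℝ) : ℝ :=
  ∑ i, jacAt u x i i

section Aux

private lemma sliceX {G : Type*} [NormedAddCommGroup G] [NormedSpace ℝ G]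
    {f : (Fin 3 → ℝ) × ℝ → G} {f' : ((Fin 3 → ℝ) × ℝ) →L[ℝ] G} {x : Fin 3 → ℝ} {t : ℝ}
    (hf : HasFDerivAt f f' (x, t)) :
    HasFDerivAt (fun y => f (y, t)) (f'.comp (ContinuousLinearMap.inl ℝ (Fin 3 → ℝ) ℝ)) x := by
  have h1 : HasFDerivAt (fun y : Fin 3 → ℝ => ((y, t) : (Fin 3 → ℝ) × ℝ))
      (ContinuousLinearMap.inl ℝ (Fin 3 → ℝ) ℝ) x :=
    (hasFDerivAt_id x).prodMk (hasFDerivAt_const t x)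
  exact hf.comp x h1

private lemma sliceT {G : Type*} [NormedAddCommGroup G] [NormedSpace ℝ G]
    {f : (Fin 3 → ℝ) × ℝ → G} {f' : ((Fin 3 → ℝ) × ℝ) →L[ℝ] G} {x : Fin 3 → ℝ} {t : ℝ}
    (hf : HasFDerivAt f f' (x, t)) :
    HasDerivAt (fun s => f (x, s)) (f' (0, 1)) t := by
  have h1 : HasDerivAt (fun s : ℝ => ((x, s) : (Fin 3 → ℝ) × ℝ)) ((0 : Fin 3 → ℝ), (1 : ℝ)) t :=
    (hasDerivAt_const t x).prodMk (hasDerivAt_id t)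
  exact hf.comp_hasDerivAt t h1

end Aux

/-- If `z = v + grad k` satisfies the impulse equation in the geometric gauge,
`∂z/∂t + Dz·v + (Dv)ᵀ·z = 0`, then `v` satisfies the incompressible Euler
momentum equation `∂v/∂t + Dv·v = −grad p` with pressure
`p = ∂k/∂t + v · grad k + ½ v·v`. -/
theorem impulse_implies_euler
    (v : (Fin 3 → ℝ) × ℝ → (Fin 3 → ℝ)) (hv : ContDiff ℝ 1 v)
    (k : (Fin 3 → ℝ) × ℝ → ℝ) (hk : ContDiff ℝ 2 k)
    (z : (Fin 3 → ℝ) × ℝ → (Fin 3 → ℝ))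
    (hz : ∀ (x : Fin 3 → ℝ) (t : ℝ),
      z (x, t) = v (x, t) + gradAt (fun y => k (y, t)) x)
    (himp : ∀ (x : Fin 3 → ℝ) (t : ℝ),
      deriv (fun s => z (x, s)) t
        + jacAt (fun y => z (y, t)) x *ᵥ v (x, t)
        + (jacAt (fun y => v (y, t)) x)ᵀ *ᵥ z (x, t) = 0)
    (p : (Fin 3 → ℝ) × ℝ → ℝ)
    (hp : ∀ (x : Fin 3 → ℝ) (t : ℝ),
      p (x, t) = deriv (fun s => k (x, s)) t
        + v (x, t) ⬝ᵥ gradAt (fun y => k (y, t)) x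
        + (1 / 2) * (v (x, t) ⬝ᵥ v (x, t))) :
    ∀ (x : Fin 3 → ℝ) (t : ℝ),
      deriv (fun s => v (x, s)) t + jacAt (fun y => v (y, t)) x *ᵥ v (x, t)
        = -gradAt (fun y => p (y, t)) x := by
  have hkd : Differentiable ℝ k := hk.differentiable two_ne_zero
  have hvd : Differentiable ℝ v := hv.differentiable one_ne_zero
  have hΦ : ContDiff ℝ 1 (fderiv ℝ k) := hk.fderiv_right (le_refl 2)
  -- gradient of the space slice of k, at any point
  have hgradk : ∀ (y : Fin 3 → ℝ) (s : ℝ) (i : Fin 3),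
      gradAt (fun y' => k (y', s)) y i = fderiv ℝ k (y, s) (Pi.single i 1, 0) := by
    intro y s i
    have := (sliceX (hkd (y, s)).hasFDerivAt).fderiv
    simp only [gradAt, this, ContinuousLinearMap.comp_apply, ContinuousLinearMap.inl_apply]
  -- time derivative of the time slice of k, at any point
  have hderk : ∀ (y : Fin 3 → ℝ) (s : ℝ),
      deriv (fun s' => k (y, s')) s = fderiv ℝ k (y, s) (0, 1) :=
    fun y s => (sliceT (hkd (y, s)).hasFDerivAt).deriv
  -- z as an explicit function
  have hzf : z = fun w => v w + fun i => fderiv ℝ k w (Pi.single i 1, 0) := by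
    funext w
    obtain ⟨y, s⟩ := w
    rw [hz y s]
    congr 1
    funext i
    exact hgradk y s i
  intro x t
  set Φ := fderiv ℝ k with hΦdef
  set B := fderiv ℝ Φ (x, t) with hBdef
  have hB : HasFDerivAt Φ B (x, t) := ((hΦ.differentiable one_ne_zero) (x, t)).hasFDerivAt
  have hsym : ∀ a b, B a b = B b a :=
    second_derivative_symmetric (fun y => (hkd y).hasFDerivAt) hB
  set Dv := fderiv ℝ v (x, t) with hDvdef
  have hFv : HasFDerivAt v Dv (x, t) := (hvd (x, t)).hasFDerivAt
  -- the gradient field G w = ∇k (w)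
  set G : (Fin 3 → ℝ) × ℝ → (Fin 3 → ℝ) := fun w => fun i => Φ w (Pi.single i 1, 0) with hGdef
  set DG : ((Fin 3 → ℝ) × ℝ) →L[ℝ] (Fin 3 → ℝ) :=
    ContinuousLinearMap.pi (fun i => (ContinuousLinearMap.apply ℝ ℝ
      ((Pi.single i 1 : Fin 3 → ℝ), (0 : ℝ))).comp B) with hDGdef
  have hG : HasFDerivAt G DG (x, t) :=
    hasFDerivAt_pi.2 fun i =>
      (ContinuousLinearMap.apply ℝ ℝ ((Pi.single i 1 : Fin 3 → ℝ), (0 : ℝ))).hasFDerivAt.comp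
        (x, t) hB
  -- jacobians
  have hjacv : ∀ i j, jacAt (fun y => v (y, t)) x i j = Dv (Pi.single j 1, 0) i := by
    intro i j
    simp only [jacAt, (sliceX hFv).fderiv, ContinuousLinearMap.comp_apply,
      ContinuousLinearMap.inl_apply]
  have hjacz : ∀ i j, jacAt (fun y => z (y, t)) x i j
      = Dv (Pi.single j 1, 0) i + B (Pi.single j 1, 0) (Pi.single i 1, 0) := by
    intro i j
    have hsum : HasFDerivAt (fun y => z (y, t)) ((Dv + DG).comp
        (ContinuousLinearMap.inl ℝ (Fin 3 → ℝ) ℝ)) x := by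
      rw [hzf]
      exact sliceX (hFv.add hG)
    simp only [jacAt, hsum.fderiv, ContinuousLinearMap.comp_apply,
      ContinuousLinearMap.inl_apply, ContinuousLinearMap.add_apply, Pi.add_apply,
      hDGdef, ContinuousLinearMap.pi_apply, ContinuousLinearMap.apply_apply]
  -- time derivative of z
  have hzder : deriv (fun s => z (x, s)) t
      = fun i => Dv (0, 1) i + B (0, 1) (Pi.single i 1, 0) := by
    have hsum : HasDerivAt (fun s => z (x, s)) ((Dv + DG) (0, 1)) t := by
      rw [hzf]
      exact sliceT (hFv.add hG)
    rw [hsum.deriv]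
    funext i
    simp only [ContinuousLinearMap.add_apply, Pi.add_apply, hDGdef,
      ContinuousLinearMap.pi_apply, ContinuousLinearMap.apply_apply,
      ContinuousLinearMap.comp_apply]
  -- time derivative of v
  have hvder : deriv (fun s => v (x, s)) t = Dv (0, 1) := (sliceT hFv).deriv
  -- the pressure slice as an explicit function
  set q : (Fin 3 → ℝ) → ℝ := fun y =>
    Φ (y, t) (0, 1) + (∑ j, v (y, t) j * Φ (y, t) (Pi.single j 1, 0))
      + 1 / 2 * ∑ j, v (y, t) j * v (y, t) j with hqdef
  have hpq : (fun y => p (y, t)) = q := by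
    funext y
    rw [hp y t, hderk y t]
    simp only [hqdef, dotProduct]
    congr 1
    · congr 1
      exact Finset.sum_congr rfl fun j _ => by rw [hgradk y t j]
  -- derivative pieces at x
  have hvx : HasFDerivAt (fun y => v (y, t))
      (Dv.comp (ContinuousLinearMap.inl ℝ (Fin 3 → ℝ) ℝ)) x := sliceX hFv
  have hvxj : ∀ j, HasFDerivAt (fun y => v (y, t) j)
      ((ContinuousLinearMap.proj j).comp
        (Dv.comp (ContinuousLinearMap.inl ℝ (Fin 3 → ℝ) ℝ))) x :=
    fun j => hasFDerivAt_pi'.1 hvx j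
  have hkx : ∀ d : (Fin 3 → ℝ) × ℝ, HasFDerivAt (fun y => Φ (y, t) d)
      (((ContinuousLinearMap.apply ℝ ℝ d).comp B).comp
        (ContinuousLinearMap.inl ℝ (Fin 3 → ℝ) ℝ)) x :=
    fun d => sliceX ((ContinuousLinearMap.apply ℝ ℝ d).hasFDerivAt.comp (x, t) hB)
  have hq : HasFDerivAt q
      ((((ContinuousLinearMap.apply ℝ ℝ ((0 : Fin 3 → ℝ), (1 : ℝ))).comp B).comp
          (ContinuousLinearMap.inl ℝ (Fin 3 → ℝ) ℝ))
        + (∑ j, (v (x, t) j • (((ContinuousLinearMap.apply ℝ ℝ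
              ((Pi.single j 1 : Fin 3 → ℝ), (0 : ℝ))).comp B).comp
              (ContinuousLinearMap.inl ℝ (Fin 3 → ℝ) ℝ))
            + Φ (x, t) (Pi.single j 1, 0) • ((ContinuousLinearMap.proj j).comp
              (Dv.comp (ContinuousLinearMap.inl ℝ (Fin 3 → ℝ) ℝ)))))
        + (1 / 2 : ℝ) • (∑ j, (v (x, t) j • ((ContinuousLinearMap.proj j).comp
              (Dv.comp (ContinuousLinearMap.inl ℝ (Fin 3 → ℝ) ℝ)))
            + v (x, t) j • ((ContinuousLinearMap.proj j).comp
              (Dv.comp (ContinuousLinearMap.inl ℝ (Fin 3 → ℝ) ℝ)))))) x := by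
    apply HasFDerivAt.add
    apply HasFDerivAt.add
    · exact hkx (0, 1)
    · exact HasFDerivAt.fun_sum fun j _ => (hvxj j).mul (hkx (Pi.single j 1, 0))
    · exact ((HasFDerivAt.sum fun j (_ : j ∈ Finset.univ) =>
        (hvxj j).mul (hvxj j)).const_mul (1 / 2 : ℝ))
  have hgradp : ∀ i, gradAt (fun y => p (y, t)) x i
      = B (Pi.single i 1, 0) (0, 1)
        + (∑ j, (v (x, t) j * B (Pi.single i 1, 0) (Pi.single j 1, 0)
            + Φ (x, t) (Pi.single j 1, 0) * Dv (Pi.single i 1, 0) j))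
        + ∑ j, v (x, t) j * Dv (Pi.single i 1, 0) j := by
    intro i
    simp only [gradAt, hpq, hq.fderiv]
    simp only [ContinuousLinearMap.add_apply, ContinuousLinearMap.coe_sum',
      Finset.sum_apply, ContinuousLinearMap.smul_apply, ContinuousLinearMap.comp_apply,
      ContinuousLinearMap.inl_apply, ContinuousLinearMap.apply_apply,
      ContinuousLinearMap.proj_apply, smul_eq_mul, Pi.add_apply]
    simp only [Fin.sum_univ_three]
    ring
  -- the impulse equation, componentwise
  funext i
  have himi := congrFun (himp x t) i
  rw [hzder] at himi
  simp only [Matrix.mulVec, dotProduct, Matrix.transpose_apply, Pi.add_apply, Pi.zero_apply,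
    hjacz, hjacv, hz x t, hgradk, Fin.sum_univ_three] at himi
  simp only [Pi.add_apply, Pi.neg_apply, Matrix.mulVec, dotProduct, hvder, hjacv,
    hgradp, Fin.sum_univ_three]
  linear_combination himi + hsym (Pi.single i 1, 0) (0, 1)
    + v (x, t) 0 * hsym (Pi.single i 1, 0) (Pi.single 0 1, 0)
    + v (x, t) 1 * hsym (Pi.single i 1, 0) (Pi.single 1 1, 0)
    + v (x, t) 2 * hsym (Pi.single i 1, 0) (Pi.single 2 1, 0)
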